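/- There is no Kripke structure K whose set of traces T satisfies: T is nonempty, and for every t ∈ T there exists t' ∈ T such that (for all j, a ∈ t(j) implies a ∈ t'(j)) and (there exists j with a ∉ t(j) and a ∈ t'(j)). -/

import Mathlib

/-- A Kripke structure over atomic propositions `AP` with state space `Q`. -/
structure Kripke (AP Q : Type*) [Fintype Q] where
  δ : Q → Set Q
  δ_nonempty : ∀ q, (δ q).Nonempty
  init : Q
  lab : Q → Set AP

/-- The set of traces of a Kripke structure: pointwise labellings of infinite runs
from the initial state. -/
def Kripke.Traces {AP Q : Type*} [Fintype Q] (K : Kripke AP Q) :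
    Set (ℕ → Set AP) :=
  {t | ∃ ρ : ℕ → Q, ρ 0 = K.init ∧ (∀ j, ρ (j + 1) ∈ K.δ (ρ j)) ∧
    ∀ j, t j = K.lab (ρ j)}

section Aux

variable {Q : Type*} [Fintype Q] (K : Kripke Unit Q)

/-- Greedy state sets: states reachable by runs realizing the greedy-optimal bits. -/
def KS : ℕ → Set Q
  | 0 => {K.init}
  | n + 1 => {q' | ∃ q ∈ KS n, ((() ∈ K.lab q) ↔ ∃ p ∈ KS n, () ∈ K.lab p) ∧ q' ∈ K.δ q}

/-- The greedy-optimal bit at position `n`. -/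
def bP (n : ℕ) : Prop := ∃ p ∈ KS K n, () ∈ K.lab p

/-- Existence of a path of length `n` from `q` realizing bits `bP (j+·)`. -/
def pathEx (q : Q) (j n : ℕ) : Prop :=
  ∃ ρ : ℕ → Q, ρ 0 = q ∧ (∀ i < n, ρ (i + 1) ∈ K.δ (ρ i)) ∧
    ∀ i ≤ n, ((() ∈ K.lab (ρ i)) ↔ bP K (j + i))

def GoodP (q : Q) (j : ℕ) : Prop := ∀ n, pathEx K q j n

lemma exists_matching : ∀ n, ∃ q ∈ KS K n, ((() ∈ K.lab q) ↔ bP K n) := by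
  intro n
  induction n with
  | zero =>
      refine ⟨K.init, rfl, ?_⟩
      simp [bP, KS]
  | succ n ih =>
      obtain ⟨q, hq, hiff⟩ := ih
      obtain ⟨q', hq'⟩ := K.δ_nonempty q
      have hq'mem : q' ∈ KS K (n + 1) := ⟨q, hq, hiff, hq'⟩
      by_cases h : bP K (n + 1)
      · obtain ⟨p, hp, hpl⟩ := h
        exact ⟨p, hp, by simp [hpl]; exact ⟨p, hp, hpl⟩⟩
      · refine ⟨q', hq'mem, ?_⟩
        constructor
        · intro hl; exact absurd ⟨q', hq'mem, hl⟩ h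
        · intro hb; exact absurd hb h

lemma reach : ∀ n, ∀ q ∈ KS K n, ∃ ρ : ℕ → Q, ρ 0 = K.init ∧
    (∀ i < n, ρ (i + 1) ∈ K.δ (ρ i)) ∧ ρ n = q ∧
    ∀ i < n, ((() ∈ K.lab (ρ i)) ↔ bP K i) := by
  intro n
  induction n with
  | zero =>
      intro q hq
      have : q = K.init := hq
      exact ⟨fun _ => q, this, fun i hi => absurd hi (by omega), rfl,
        fun i hi => absurd hi (by omega)⟩
  | succ n ih =>
      intro q hq
      obtain ⟨p, hp, hpm, hqδ⟩ := hq
      obtain ⟨ρ, h0, hs, hend, hb⟩ := ih p hp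
      refine ⟨fun i => if i ≤ n then ρ i else q, by simp [h0], ?_, by simp, ?_⟩
      · intro i hi
        rcases Nat.lt_or_ge i n with h | h
        · simpa [Nat.le_of_lt h, Nat.succ_le_of_lt h] using hs i h
        · have hin : i = n := by omega
          subst hin
          simp [hend, hqδ]
      · intro i hi
        have hin : i ≤ n := by omega
        rcases Nat.lt_or_ge i n with h | h
        · simpa [hin] using hb i h
        · have : i = n := by omega
          subst this
          simpa [hend, bP] using hpm

lemma good_init : GoodP K K.init 0 := by
  intro n
  obtain ⟨q, hq, hiff⟩ := exists_matching K n
  obtain ⟨ρ, h0, hs, hend, hb⟩ := reach K n q hq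
  refine ⟨ρ, h0, hs, ?_⟩
  intro i hi
  rcases Nat.lt_or_ge i n with h | h
  · simpa using hb i h
  · have : i = n := by omega
    subst this
    simpa [hend] using hiff

lemma pathEx_anti {q : Q} {j m n : ℕ} (h : m ≤ n) (hp : pathEx K q j n) :
    pathEx K q j m := by
  obtain ⟨ρ, h0, hs, hb⟩ := hp
  exact ⟨ρ, h0, fun i hi => hs i (by omega), fun i hi => hb i (by omega)⟩

lemma good_step {q : Q} {j : ℕ} (hg : GoodP K q j) :
    ∃ q', q' ∈ K.δ q ∧ GoodP K q' (j + 1) := by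
  by_contra hcon
  push_neg at hcon
  -- each successor fails at some length
  have hf : ∀ q' : Q, ∃ N, q' ∈ K.δ q → ¬ pathEx K q' (j + 1) N := by
    intro q'
    by_cases h : q' ∈ K.δ q
    · obtain ⟨N, hN⟩ := not_forall.mp (hcon q' h)
      exact ⟨N, fun _ => hN⟩
    · exact ⟨0, fun hh => absurd hh h⟩
  choose Nf hNf using hf
  set N := Finset.univ.sup Nf with hNdefN
  have hfail : ∀ q' ∈ K.δ q, ¬ pathEx K q' (j + 1) N := by
    intro q' hq' hp
    exact hNf q' hq' (pathEx_anti K (Finset.le_sup (Finset.mem_univ q')) hp)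
  obtain ⟨ρ, h0, hs, hb⟩ := hg (N + 1)
  refine hfail (ρ 1) (h0 ▸ hs 0 (by omega)) ?_
  refine ⟨fun i => ρ (i + 1), rfl, fun i hi => hs (i + 1) (by omega), ?_⟩
  intro i hi
  have := hb (i + 1) (by omega)
  have harith : j + (i + 1) = j + 1 + i := by omega
  rw [harith] at this
  exact this

noncomputable def runF : (n : ℕ) → {q : Q // GoodP K q n}
  | 0 => ⟨K.init, good_init K⟩
  | n + 1 => ⟨(good_step K (runF n).2).choose,
      (good_step K (runF n).2).choose_spec.2⟩

lemma runF_step (n : ℕ) : (runF K (n + 1)).1 ∈ K.δ (runF K n).1 :=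
  (good_step K (runF K n).2).choose_spec.1

lemma runF_bit (n : ℕ) : (() ∈ K.lab (runF K n).1) ↔ bP K n := by
  obtain ⟨ρ, h0, -, hb⟩ := (runF K n).2 0
  have := hb 0 le_rfl
  rw [h0] at this
  simpa using this

lemma mem_KS (ρ : ℕ → Q) (h0 : ρ 0 = K.init) (hs : ∀ i, ρ (i + 1) ∈ K.δ (ρ i)) :
    ∀ j, (∀ i < j, ((() ∈ K.lab (ρ i)) ↔ bP K i)) → ρ j ∈ KS K j := by
  intro j
  induction j with
  | zero => intro _; exact h0
  | succ j ih =>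
      intro hb
      exact ⟨ρ j, ih (fun i hi => hb i (by omega)), hb j (by omega), hs j⟩

end Aux

/-- With `AP = {a}` (formalized as `Unit`): no Kripke structure has a nonempty set
of traces `T` satisfying `∀π.∃π'. G(a_π → a_{π'}) ∧ F(¬a_π ∧ a_{π'})`. -/
theorem no_kripke_model {Q : Type*} [Fintype Q] (K : Kripke Unit Q) :
    ¬ (K.Traces.Nonempty ∧
      ∀ t ∈ K.Traces, ∃ t' ∈ K.Traces,
        (∀ j, () ∈ t j → () ∈ t' j) ∧ (∃ j, () ∉ t j ∧ () ∈ t' j)) := by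
  classical
  rintro ⟨-, H⟩
  -- the greedy maximal trace
  set ρ : ℕ → Q := fun n => (runF K n).1 with hρ
  set t : ℕ → Set Unit := fun n => K.lab (ρ n) with ht
  have hρ0 : ρ 0 = K.init := rfl
  have hρs : ∀ i, ρ (i + 1) ∈ K.δ (ρ i) := fun i => runF_step K i
  have htT : t ∈ K.Traces := ⟨ρ, hρ0, hρs, fun j => rfl⟩
  have hbit : ∀ n, (() ∈ t n) ↔ bP K n := fun n => runF_bit K n
  obtain ⟨t', ht'T, hmono, hex⟩ := H t htT
  obtain ⟨ρ', h0', hs', hlab'⟩ := ht'T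
  have hexists : ∃ j, () ∉ t j ∧ () ∈ t' j := hex
  set j := Nat.find hexists with hj
  obtain ⟨hj1, hj2⟩ := Nat.find_spec hexists
  -- bits of ρ' match greedy bits below j
  have hbelow : ∀ i < j, ((() ∈ K.lab (ρ' i)) ↔ bP K i) := by
    intro i hi
    by_cases hb : bP K i
    · have : () ∈ t i := (hbit i).mpr hb
      have : () ∈ t' i := hmono i this
      rw [hlab' i] at this
      simp [this, hb]
    · have hnot' : () ∉ t' i := by
        intro hmem
        have hnt : () ∉ t i := fun h => hb ((hbit i).mp h)
        exact Nat.find_min hexists hi ⟨hnt, hmem⟩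
      rw [hlab' i] at hnot'
      simp [hnot', hb]
  have hmem : ρ' j ∈ KS K j := mem_KS K ρ' h0' hs' j hbelow
  have hbj : bP K j := ⟨ρ' j, hmem, by rw [← hlab' j]; exact hj2⟩
  exact hj1 ((hbit j).mpr hbj)
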